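/- In any feasible schedule of a job system, for all real numbers s and e with s ≤ e, the sum of the lengths B_j over all jobs j whose release time satisfies s ≤ r_j and whose deadline satisfies d_j ≤ e is at most e − s (the demand of the interval [s, e] never exceeds its length). -/
import Mathlib

/-- **Interval-demand condition.**
In any feasible schedule of a job system (jobs `j` with release time `r j`,
deadline `d j`, length `B j > 0`; start times `sched j` satisfying
`r j ≤ sched j`, `sched j + B j ≤ d j`, with pairwise disjoint execution
intervals `[sched j, sched j + B j)`), for all reals `s ≤ e`, the sum of the
lengths `B j` over all jobs `j` with `s ≤ r j` and `d j ≤ e` is at most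
`e - s`. -/
theorem demand_le_interval_length
    {ι : Type*} [Fintype ι]
    (r d B sched : ι → ℝ)
    (hB : ∀ j, 0 < B j)
    (hrel : ∀ j, r j ≤ sched j)
    (hdl : ∀ j, sched j + B j ≤ d j)
    (hdisj : ∀ j k, j ≠ k →
      Disjoint (Set.Ico (sched j) (sched j + B j))
               (Set.Ico (sched k) (sched k + B k)))
    (s e : ℝ) (hse : s ≤ e) :
    ∑ j ∈ Finset.univ.filter (fun j => s ≤ r j ∧ d j ≤ e), B j ≤ e - s := by
  classical
  set F := Finset.univ.filter (fun j => s ≤ r j ∧ d j ≤ e) with hF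
  have hsub : ∀ j ∈ F, Set.Ico (sched j) (sched j + B j) ⊆ Set.Ico s e := by
    intro j hj
    simp only [hF, Finset.mem_filter] at hj
    exact Set.Ico_subset_Ico (le_trans hj.2.1 (hrel j))
      (le_trans (hdl j) hj.2.2)
  have hmeas : ∑ j ∈ F, MeasureTheory.volume (Set.Ico (sched j) (sched j + B j))
      = MeasureTheory.volume (⋃ j ∈ F, Set.Ico (sched j) (sched j + B j)) := by
    refine (MeasureTheory.measure_biUnion_finset ?_ ?_).symm
    · intro j hj k hk hjk
      exact hdisj j k hjk
    · intro j _; exact measurableSet_Ico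
  have hle : MeasureTheory.volume (⋃ j ∈ F, Set.Ico (sched j) (sched j + B j))
      ≤ MeasureTheory.volume (Set.Ico s e) := by
    apply MeasureTheory.measure_mono
    exact Set.iUnion₂_subset hsub
  have key : ∑ j ∈ F, ENNReal.ofReal (B j) ≤ ENNReal.ofReal (e - s) := by
    calc ∑ j ∈ F, ENNReal.ofReal (B j)
        = ∑ j ∈ F, MeasureTheory.volume (Set.Ico (sched j) (sched j + B j)) := by
          refine Finset.sum_congr rfl fun j _ => ?_
          rw [Real.volume_Ico]; ring_nf
      _ ≤ MeasureTheory.volume (Set.Ico s e) := hmeas ▸ hle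
      _ = ENNReal.ofReal (e - s) := Real.volume_Ico
  rw [← ENNReal.ofReal_sum_of_nonneg (fun j _ => (hB j).le)] at key
  exact (ENNReal.ofReal_le_ofReal_iff (by linarith)).mp key
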